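/- Fundamental theorem of Hopf modules: If M is a right Hopf module over a finitely generated projective Hopf k-algebra H, then M ≅ P(M) ⊗_k H as Hopf modules, where P(M) = {m ∈ M : χ(m) = m ⊗ 1} is the submodule of coinvariants, and P(M) is a k-direct summand of M. -/

import Mathlib

open scoped TensorProduct

open TensorProduct LinearMap Coalgebra HopfAlgebra

section Conv
variable (k H : Type*) [CommRing k] [Ring H] [HopfAlgebra k H]

/-- scalar counit lemmas -/
lemma sum_smul_counit_right {k H : Type*} [CommRing k] [Ring H] [HopfAlgebra k H] {a : H} {ι : Type*} (r : Coalgebra.Repr k a ι) :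
    ∑ i ∈ r.index, Coalgebra.counit (R := k) (r.left i) • r.right i = a := by
  have h := Coalgebra.sum_counit_tmul_eq (R := k) r
  have := congrArg (TensorProduct.lid k H) h
  simp only [map_sum, TensorProduct.lid_tmul, one_smul] at this
  exact this

lemma sum_smul_counit_left {k H : Type*} [CommRing k] [Ring H] [HopfAlgebra k H] {a : H} {ι : Type*} (r : Coalgebra.Repr k a ι) :
    ∑ i ∈ r.index, Coalgebra.counit (R := k) (r.right i) • r.left i = a := by
  have h := Coalgebra.sum_tmul_counit_eq (R := k) r
  have := congrArg (TensorProduct.rid k H) h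
  simp only [map_sum, TensorProduct.rid_tmul, one_smul] at this
  exact this

noncomputable def conv (f g : H →ₗ[k] H ⊗[k] H) : H →ₗ[k] H ⊗[k] H :=
  (LinearMap.mul' k (H ⊗[k] H)) ∘ₗ (TensorProduct.map f g) ∘ₗ Coalgebra.comul

variable {k H}

lemma conv_apply (f g : H →ₗ[k] H ⊗[k] H) {a : H} {ι : Type*} (r : Coalgebra.Repr k a ι) :
    conv k H f g a = ∑ i ∈ r.index, f (r.left i) * g (r.right i) := by
  simp only [conv, LinearMap.comp_apply, ← r.eq, map_sum, TensorProduct.map_tmul,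
    LinearMap.mul'_apply]

noncomputable def convUnit : H →ₗ[k] H ⊗[k] H :=
  (Algebra.linearMap k (H ⊗[k] H)) ∘ₗ Coalgebra.counit

lemma convUnit_apply (a : H) :
    convUnit (k := k) (H := H) a = Coalgebra.counit (R := k) a • 1 := by
  simp [convUnit, Algebra.smul_def]

lemma one_conv (f : H →ₗ[k] H ⊗[k] H) : conv k H convUnit f = f := by
  ext a
  rw [conv_apply _ _ (ℛ k a)]
  simp only [convUnit_apply, smul_mul_assoc, one_mul, ← map_smul]
  rw [← map_sum, sum_smul_counit_right]

lemma conv_one (f : H →ₗ[k] H ⊗[k] H) : conv k H f convUnit = f := by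
  ext a
  rw [conv_apply _ _ (ℛ k a)]
  simp only [convUnit_apply, mul_smul_comm, mul_one, ← map_smul]
  rw [← map_sum, sum_smul_counit_left]

lemma conv_assoc (p q r : H →ₗ[k] H ⊗[k] H) :
    conv k H (conv k H p q) r = conv k H p (conv k H q r) := by
  ext a
  set ra := ℛ k a
  set rl : (i : ra.ι) → Coalgebra.Repr k (ra.left i) (H × H) := fun i => ℛ k (ra.left i)
  set rr : (i : ra.ι) → Coalgebra.Repr k (ra.right i) (H × H) := fun i => ℛ k (ra.right i)
  have key := Coalgebra.sum_tmul_tmul_eq (R := k) ra rl rr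
  -- apply the trilinear multiplication map to both sides
  set B := H ⊗[k] H
  set μ : H ⊗[k] (H ⊗[k] H) →ₗ[k] B :=
    (LinearMap.mul' k B) ∘ₗ
      (TensorProduct.map p ((LinearMap.mul' k B) ∘ₗ TensorProduct.map q r))
  have key2 := congrArg μ key
  simp only [map_sum, μ, LinearMap.comp_apply, TensorProduct.map_tmul,
    LinearMap.mul'_apply] at key2
  rw [conv_apply _ _ ra, conv_apply _ _ ra]
  calc ∑ i ∈ ra.index, conv k H p q (ra.left i) * r (ra.right i)
      = ∑ i ∈ ra.index, ∑ j ∈ (rl i).index,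
          p ((rl i).left j) * (q ((rl i).right j) * r (ra.right i)) := by
        refine Finset.sum_congr rfl fun i _ => ?_
        rw [conv_apply _ _ (rl i), Finset.sum_mul]
        exact Finset.sum_congr rfl fun j _ => mul_assoc _ _ _
    _ = ∑ i ∈ ra.index, ∑ j ∈ (rr i).index,
          p (ra.left i) * (q ((rr i).left j) * r ((rr i).right j)) := key2
    _ = ∑ i ∈ ra.index, p (ra.left i) * conv k H q r (ra.right i) := by
        refine Finset.sum_congr rfl fun i _ => ?_
        rw [conv_apply _ _ (rr i), Finset.mul_sum]

noncomputable def antipodeFlip : H →ₗ[k] H ⊗[k] H :=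
  (TensorProduct.map (HopfAlgebra.antipode (R := k)) (HopfAlgebra.antipode (R := k))) ∘ₗ
    (TensorProduct.comm k H H).toLinearMap ∘ₗ Coalgebra.comul

lemma antipodeFlip_apply {a : H} {ι : Type*} (r : Coalgebra.Repr k a ι) :
    antipodeFlip (k := k) (H := H) a =
      ∑ i ∈ r.index, HopfAlgebra.antipode (R := k) (r.right i) ⊗ₜ[k]
        HopfAlgebra.antipode (R := k) (r.left i) := by
  simp only [antipodeFlip, LinearMap.comp_apply, ← r.eq, map_sum, LinearEquiv.coe_coe,
    TensorProduct.comm_tmul, TensorProduct.map_tmul]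

lemma aux1 : conv k H Coalgebra.comul
    (Coalgebra.comul ∘ₗ HopfAlgebra.antipode (R := k)) = convUnit := by
  ext a
  rw [conv_apply _ _ (ℛ k a), convUnit_apply]
  simp only [LinearMap.comp_apply, ← Bialgebra.comul_mul]
  rw [← map_sum, HopfAlgebra.sum_mul_antipode_eq_smul (ℛ k a), map_smul,
    Bialgebra.comul_one, Algebra.TensorProduct.one_def]

lemma aux2 : conv k H antipodeFlip Coalgebra.comul = convUnit := by
  ext a
  set S : H →ₗ[k] H := HopfAlgebra.antipode (R := k) with hS
  set ra := ℛ k a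
  set rl : (i : ra.ι) → Coalgebra.Repr k (ra.left i) (H × H) := fun i => ℛ k (ra.left i)
  set rr : (i : ra.ι) → Coalgebra.Repr k (ra.right i) (H × H) := fun i => ℛ k (ra.right i)
  set B := H ⊗[k] H with hB
  -- Ω₁ (p ⊗ (q ⊗ w)) = (S q ⊗ S p) * comul w
  set Ω₁ : H ⊗[k] (H ⊗[k] H) →ₗ[k] B :=
    (LinearMap.mul' k B) ∘ₗ
      (TensorProduct.map (TensorProduct.map S S) (Coalgebra.comul)) ∘ₗ
      (TensorProduct.assoc k H H H).symm.toLinearMap ∘ₗ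
      (LinearMap.lTensor H (TensorProduct.comm k H H).toLinearMap) ∘ₗ
      (TensorProduct.assoc k H H H).toLinearMap ∘ₗ
      (TensorProduct.comm k H (H ⊗[k] H)).toLinearMap with hΩ₁
  have hΩ₁app : ∀ (p q w : H), Ω₁ (p ⊗ₜ (q ⊗ₜ w)) =
      (S q ⊗ₜ[k] S p) * Coalgebra.comul (R := k) w := by
    intro p q w
    simp only [hΩ₁, LinearMap.comp_apply, LinearEquiv.coe_coe, TensorProduct.comm_tmul,
      TensorProduct.assoc_tmul, LinearMap.lTensor_tmul, TensorProduct.assoc_symm_tmul,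
      TensorProduct.map_tmul, LinearMap.mul'_apply]
    rw [TensorProduct.map_tmul]
  have key := congrArg Ω₁ (Coalgebra.sum_tmul_tmul_eq (R := k) ra rl rr)
  simp only [map_sum, hΩ₁app] at key
  have lhs_eq : conv k H antipodeFlip Coalgebra.comul a =
      ∑ i ∈ ra.index, ∑ j ∈ (rl i).index,
        (S ((rl i).right j) ⊗ₜ[k] S ((rl i).left j)) *
          Coalgebra.comul (R := k) (ra.right i) := by
    rw [conv_apply _ _ ra]
    refine Finset.sum_congr rfl fun i _ => ?_
    rw [antipodeFlip_apply (rl i), Finset.sum_mul]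
  rw [lhs_eq, key]
  -- reduce each i-term using coassoc on (ra.right i)
  have step2 : ∀ i, ∑ j ∈ (rr i).index,
        (S ((rr i).left j) ⊗ₜ[k] S (ra.left i)) *
          Coalgebra.comul (R := k) ((rr i).right j) =
      (1 : H) ⊗ₜ[k] (S (ra.left i) * ra.right i) := by
    intro i
    set ru : (j : (rr i).ι) → Coalgebra.Repr k ((rr i).left j) (H × H) :=
      fun j => ℛ k ((rr i).left j)
    set rv : (j : (rr i).ι) → Coalgebra.Repr k ((rr i).right j) (H × H) :=
      fun j => ℛ k ((rr i).right j)
    set c := S (ra.left i) with hc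
    -- Ω₂ (q ⊗ (w ⊗ z)) = (S q * w) ⊗ (c * z)
    set Ω₂ : H ⊗[k] (H ⊗[k] H) →ₗ[k] B :=
      (LinearMap.lTensor H (LinearMap.mulLeft k c)) ∘ₗ
        (LinearMap.rTensor H (LinearMap.mul' k H)) ∘ₗ
        (TensorProduct.assoc k H H H).symm.toLinearMap ∘ₗ
        (LinearMap.rTensor (H ⊗[k] H) S) with hΩ₂
    have hΩ₂app : ∀ (q w z : H), Ω₂ (q ⊗ₜ (w ⊗ₜ z)) = (S q * w) ⊗ₜ[k] (c * z) := by
      intro q w z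
      simp only [hΩ₂, LinearMap.comp_apply, LinearMap.rTensor_tmul, LinearEquiv.coe_coe,
        TensorProduct.assoc_symm_tmul, LinearMap.lTensor_tmul, LinearMap.mul'_apply,
        LinearMap.mulLeft_apply]
      rw [LinearMap.lTensor_tmul, LinearMap.mulLeft_apply]
    have key2 := congrArg Ω₂ (Coalgebra.sum_tmul_tmul_eq (R := k) (rr i) ru rv)
    simp only [map_sum, hΩ₂app] at key2
    have lhs2 : ∑ j ∈ (rr i).index,
        (S ((rr i).left j) ⊗ₜ[k] c) * Coalgebra.comul (R := k) ((rr i).right j) =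
        ∑ j ∈ (rr i).index, ∑ m ∈ (rv j).index,
          (S ((rr i).left j) * (rv j).left m) ⊗ₜ[k] (c * (rv j).right m) := by
      refine Finset.sum_congr rfl fun j _ => ?_
      rw [← (rv j).eq, Finset.mul_sum]
      refine Finset.sum_congr rfl fun m _ => ?_
      rw [Algebra.TensorProduct.tmul_mul_tmul]
    rw [lhs2, ← key2]
    have inner : ∀ j, ∑ m ∈ (ru j).index,
        (S ((ru j).left m) * (ru j).right m) ⊗ₜ[k] (c * (rr i).right j) =
        Coalgebra.counit (R := k) ((rr i).left j) •
          ((1 : H) ⊗ₜ[k] (c * (rr i).right j)) := by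
      intro j
      rw [← TensorProduct.sum_tmul, HopfAlgebra.sum_antipode_mul_eq_smul (ru j),
        TensorProduct.smul_tmul']
    simp only [inner, ← TensorProduct.tmul_smul]
    rw [← TensorProduct.tmul_sum]
    congr 1
    simp only [← mul_smul_comm]
    rw [← Finset.mul_sum, sum_smul_counit_right (rr i)]
  simp only [step2]
  rw [← TensorProduct.tmul_sum, HopfAlgebra.sum_antipode_mul_eq_smul ra, convUnit_apply,
    TensorProduct.tmul_smul, Algebra.TensorProduct.one_def]

lemma comul_antipode' :
    (Coalgebra.comul ∘ₗ HopfAlgebra.antipode (R := k) : H →ₗ[k] H ⊗[k] H) = antipodeFlip := by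
  have h1 : antipodeFlip (k := k) (H := H) =
      conv k H (conv k H antipodeFlip Coalgebra.comul)
        (Coalgebra.comul ∘ₗ HopfAlgebra.antipode (R := k)) := by
    rw [conv_assoc, aux1, conv_one]
  rw [h1, aux2, one_conv]

lemma comul_antipode {a : H} {ι : Type*} (r : Coalgebra.Repr k a ι) :
    Coalgebra.comul (R := k) (HopfAlgebra.antipode (R := k) a) =
      ∑ i ∈ r.index, HopfAlgebra.antipode (R := k) (r.right i) ⊗ₜ[k]
        HopfAlgebra.antipode (R := k) (r.left i) := by
  have := LinearMap.congr_fun (comul_antipode' (k := k) (H := H)) a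
  rw [LinearMap.comp_apply] at this
  rw [this, antipodeFlip_apply r]

end Conv

section HopfModule
variable {k H M : Type*} [CommRing k] [Ring H] [HopfAlgebra k H]
  [AddCommGroup M] [Module k M]

lemma hopf_antipode_one : HopfAlgebra.antipode (R := k) (1 : H) = 1 := by
  have h := HopfAlgebra.mul_antipode_rTensor_comul_apply (R := k) (A := H) (1 : H)
  rw [Bialgebra.comul_one, Algebra.TensorProduct.one_def] at h
  simpa using h

variable (act : M →ₗ[k] H →ₗ[k] M) (ρ : M →ₗ[k] M ⊗[k] H)

/-- `E m = ∑ m₀ · S(m₁)`, the projection onto coinvariants. -/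
noncomputable def Emap : M →ₗ[k] M :=
  TensorProduct.lift act ∘ₗ
    (LinearMap.lTensor M (HopfAlgebra.antipode (R := k))) ∘ₗ ρ

/-- the compatibility in linear-map form -/
noncomputable def Lam : (M ⊗[k] H) ⊗[k] (H ⊗[k] H) →ₗ[k] M ⊗[k] H :=
  TensorProduct.lift
    ((TensorProduct.homTensorHomMap (RingHom.id k) M H M H ∘ₗ
      TensorProduct.map act.flip (LinearMap.mul k H).flip).flip)

def Hcompat : Prop := ∀ (m : M) (h : H),
      ρ (act m h) =
        (TensorProduct.homTensorHomMap (RingHom.id k) M H M H)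
          ((TensorProduct.map act.flip (LinearMap.mul k H).flip)
            (Coalgebra.comul (R := k) h)) (ρ m)

lemma compat' (hcompat : Hcompat act ρ) :
    ρ ∘ₗ TensorProduct.lift act =
      Lam act ∘ₗ TensorProduct.map ρ (Coalgebra.comul (R := k)) := by
  apply TensorProduct.ext'
  intro m h
  simp only [LinearMap.comp_apply, TensorProduct.lift.tmul, TensorProduct.map_tmul,
    Lam, LinearMap.flip_apply]
  exact hcompat m h

lemma rho_act (hcompat : Hcompat act ρ) (x : M) (hx : ρ x = x ⊗ₜ[k] 1) (h : H) :
    ρ (act x h) = LinearMap.rTensor H (act x) (Coalgebra.comul (R := k) h) := by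
  rw [hcompat x h, hx]
  induction Coalgebra.comul (R := k) h using TensorProduct.induction_on with
  | zero => simp
  | tmul g g' =>
      simp only [TensorProduct.map_tmul, TensorProduct.homTensorHomMap_apply,
        LinearMap.rTensor_tmul, LinearMap.flip_apply, LinearMap.mul_apply',
        one_mul]
  | add u v hu hv => simp only [map_add, LinearMap.add_apply, hu, hv]

lemma E_act (hcompat : Hcompat act ρ) (hact_one : ∀ m : M, act m 1 = m)
    (hact_mul : ∀ (m : M) (g h : H), act (act m g) h = act m (g * h))
    (x : M) (hx : ρ x = x ⊗ₜ[k] 1) (g : H) :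
    Emap act ρ (act x g) = Coalgebra.counit (R := k) g • x := by
  have step : ∀ w : H ⊗[k] H,
      TensorProduct.lift act
        ((LinearMap.lTensor M (HopfAlgebra.antipode (R := k)))
          (LinearMap.rTensor H (act x) w)) =
      act x ((LinearMap.mul' k H) ((LinearMap.lTensor H (HopfAlgebra.antipode (R := k))) w)) := by
    intro w
    induction w using TensorProduct.induction_on with
    | zero => simp
    | tmul g₁ g₂ =>
        simp only [LinearMap.rTensor_tmul, LinearMap.lTensor_tmul,
          TensorProduct.lift.tmul, LinearMap.mul'_apply]
        exact hact_mul x g₁ _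
    | add u v hu hv => simp only [map_add, hu, hv]
  rw [Emap, LinearMap.comp_apply, LinearMap.comp_apply,
    rho_act act ρ hcompat x hx g, step,
    HopfAlgebra.mul_antipode_lTensor_comul_apply,
    Algebra.algebraMap_eq_smul_one, map_smul, hact_one]

lemma E_mem (hact_one : ∀ m : M, act m 1 = m) (x : M) (hx : ρ x = x ⊗ₜ[k] 1) : Emap act ρ x = x := by
  rw [Emap, LinearMap.comp_apply, LinearMap.comp_apply, hx]
  simp [hopf_antipode_one]
  exact hact_one x

/-- `D (g ⊗ h) = ∑ (Sh)₁ ⊗ g·(Sh)₂` -/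
noncomputable def Dmap (k H : Type*) [CommRing k] [Ring H] [HopfAlgebra k H] :
    H ⊗[k] H →ₗ[k] H ⊗[k] H :=
  (LinearMap.lTensor H (LinearMap.mul' k H)) ∘ₗ
    (TensorProduct.leftComm k H H H).toLinearMap ∘ₗ
    (LinearMap.lTensor H
      ((Coalgebra.comul (R := k)) ∘ₗ (HopfAlgebra.antipode (R := k))))

lemma Dmap_comul {k H : Type*} [CommRing k] [Ring H] [HopfAlgebra k H] (h : H) :
    Dmap k H (Coalgebra.comul (R := k) h) =
      HopfAlgebra.antipode (R := k) h ⊗ₜ[k] 1 := by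
  set S : H →ₗ[k] H := HopfAlgebra.antipode (R := k) with hS
  set r := ℛ k h
  set rl : (i : r.ι) → Coalgebra.Repr k (r.left i) (H × H) := fun i => ℛ k (r.left i)
  set rr : (i : r.ι) → Coalgebra.Repr k (r.right i) (H × H) := fun i => ℛ k (r.right i)
  -- Ω₃ (p ⊗ (q ⊗ w)) = S w ⊗ (p * S q)
  set Ω₃ : H ⊗[k] (H ⊗[k] H) →ₗ[k] H ⊗[k] H :=
    (TensorProduct.map S ((LinearMap.mul' k H) ∘ₗ (LinearMap.lTensor H S))) ∘ₗ
      (TensorProduct.leftComm k H H H).toLinearMap ∘ₗ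
      (LinearMap.lTensor H (TensorProduct.comm k H H).toLinearMap) with hΩ₃
  have hΩ₃app : ∀ (p q w : H), Ω₃ (p ⊗ₜ (q ⊗ₜ w)) = S w ⊗ₜ[k] (p * S q) := by
    intro p q w
    simp only [hΩ₃, LinearMap.comp_apply, LinearMap.lTensor_tmul, LinearEquiv.coe_coe,
      TensorProduct.comm_tmul, TensorProduct.leftComm_tmul, TensorProduct.map_tmul,
      LinearMap.mul'_apply]
  have key := congrArg Ω₃ (Coalgebra.sum_tmul_tmul_eq (R := k) r rl rr)
  simp only [map_sum, hΩ₃app] at key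
  have lhs_eq : Dmap k H (Coalgebra.comul (R := k) h) =
      ∑ i ∈ r.index, ∑ j ∈ (rr i).index,
        S ((rr i).right j) ⊗ₜ[k] (r.left i * S ((rr i).left j)) := by
    rw [Dmap, ← r.eq, map_sum]
    refine Finset.sum_congr rfl fun i _ => ?_
    simp only [LinearMap.comp_apply, LinearMap.lTensor_tmul, hS]
    rw [comul_antipode (rr i)]
    simp only [map_sum, TensorProduct.tmul_sum, LinearEquiv.coe_coe,
      TensorProduct.leftComm_tmul, LinearMap.lTensor_tmul, LinearMap.mul'_apply]
  rw [lhs_eq, ← key]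
  have inner : ∀ i, ∑ j ∈ (rl i).index,
      S (r.right i) ⊗ₜ[k] ((rl i).left j * S ((rl i).right j)) =
      Coalgebra.counit (R := k) (r.left i) • (S (r.right i) ⊗ₜ[k] (1 : H)) := by
    intro i
    rw [← TensorProduct.tmul_sum, HopfAlgebra.sum_mul_antipode_eq_smul (rl i),
      TensorProduct.tmul_smul]
  simp only [inner, TensorProduct.smul_tmul', ← map_smul]
  rw [← TensorProduct.sum_tmul, ← map_sum, sum_smul_counit_right r]

lemma E_coinv (hcompat : Hcompat act ρ)
    (hcoassoc : ∀ m : M,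
      (TensorProduct.assoc k M H H) ((LinearMap.rTensor H ρ) (ρ m)) =
        (LinearMap.lTensor M (Coalgebra.comul (R := k))) (ρ m))
    (m : M) :
    ρ (Emap act ρ m) = Emap act ρ m ⊗ₜ[k] 1 := by
  set S : H →ₗ[k] H := HopfAlgebra.antipode (R := k) with hS
  have step1 : ρ (Emap act ρ m) =
      Lam act ((TensorProduct.map ρ (Coalgebra.comul (R := k)))
        ((LinearMap.lTensor M S) (ρ m))) := by
    have := LinearMap.congr_fun (compat' act ρ hcompat) ((LinearMap.lTensor M S) (ρ m))
    simpa [Emap] using this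
  have I1 : (TensorProduct.map ρ (Coalgebra.comul (R := k))) ∘ₗ (LinearMap.lTensor M S) =
      (LinearMap.lTensor (M ⊗[k] H) ((Coalgebra.comul (R := k)) ∘ₗ S)) ∘ₗ
        (LinearMap.rTensor H ρ) := by
    apply TensorProduct.ext'
    intro m' h
    simp
  have I2 : (LinearMap.rTensor H ρ) (ρ m) =
      (TensorProduct.assoc k M H H).symm
        ((LinearMap.lTensor M (Coalgebra.comul (R := k))) (ρ m)) := by
    rw [← hcoassoc m, LinearEquiv.symm_apply_apply]
  have claim4 : ∀ (m' : M) (w : H ⊗[k] H),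
      Lam act ((LinearMap.lTensor (M ⊗[k] H) ((Coalgebra.comul (R := k)) ∘ₗ S))
        ((TensorProduct.assoc k M H H).symm (m' ⊗ₜ w))) =
      (TensorProduct.map (act m') LinearMap.id) (Dmap k H w) := by
    intro m' w
    induction w using TensorProduct.induction_on with
    | zero => simp
    | tmul g h =>
        have sub : ∀ u : H ⊗[k] H,
            TensorProduct.homTensorHomMap (RingHom.id k) M H M H
              ((TensorProduct.map act.flip (LinearMap.mul k H).flip) u) (m' ⊗ₜ[k] g) =
            (TensorProduct.map (act m') LinearMap.id)
              ((LinearMap.lTensor H (LinearMap.mul' k H))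
                ((TensorProduct.leftComm k H H H) (g ⊗ₜ u))) := by
          intro u
          induction u using TensorProduct.induction_on with
          | zero => simp
          | tmul p q =>
              simp only [TensorProduct.map_tmul, TensorProduct.homTensorHomMap_apply,
                TensorProduct.leftComm_tmul, LinearMap.lTensor_tmul, LinearMap.mul'_apply,
                LinearMap.flip_apply, LinearMap.mul_apply', LinearMap.id_coe, id_eq]
          | add u v hu hv => simp only [map_add, TensorProduct.tmul_add,
              LinearMap.add_apply, hu, hv]
        simp only [TensorProduct.assoc_symm_tmul, LinearMap.lTensor_tmul,
          LinearMap.comp_apply, Lam, TensorProduct.lift.tmul, LinearMap.flip_apply]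
        rw [sub (Coalgebra.comul (R := k) (S h))]
        simp only [Dmap, LinearMap.comp_apply, LinearMap.lTensor_tmul, LinearEquiv.coe_coe]
        rfl
    | add u v hu hv => simp only [TensorProduct.tmul_add, map_add, hu, hv]
  have claim5 : (Lam act) ∘ₗ
      (LinearMap.lTensor (M ⊗[k] H) ((Coalgebra.comul (R := k)) ∘ₗ S)) ∘ₗ
      (TensorProduct.assoc k M H H).symm.toLinearMap ∘ₗ
      (LinearMap.lTensor M (Coalgebra.comul (R := k))) =
      ((TensorProduct.mk k M H).flip 1) ∘ₗ TensorProduct.lift act ∘ₗ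
        (LinearMap.lTensor M S) := by
    apply TensorProduct.ext'
    intro m' h
    simp only [LinearMap.comp_apply, LinearMap.lTensor_tmul, LinearEquiv.coe_coe]
    rw [claim4 m' (Coalgebra.comul (R := k) h), Dmap_comul h]
    simp [TensorProduct.mk_apply]
    rfl
  rw [step1]
  have I1' := LinearMap.congr_fun I1 (ρ m)
  simp only [LinearMap.comp_apply] at I1'
  rw [I1', I2]
  have := LinearMap.congr_fun claim5 (ρ m)
  simp only [LinearMap.comp_apply, LinearEquiv.coe_coe] at this
  rw [this]
  simp [Emap, TensorProduct.mk_apply]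
  rfl

lemma recomb
    (hact_one : ∀ m : M, act m 1 = m)
    (hact_mul : ∀ (m : M) (g h : H), act (act m g) h = act m (g * h))
    (hcounit : ∀ m : M,
      (TensorProduct.rid k M) ((LinearMap.lTensor M (Coalgebra.counit (R := k))) (ρ m)) = m)
    (hcoassoc : ∀ m : M,
      (TensorProduct.assoc k M H H) ((LinearMap.rTensor H ρ) (ρ m)) =
        (LinearMap.lTensor M (Coalgebra.comul (R := k))) (ρ m))
    (m : M) :
    TensorProduct.lift (act ∘ₗ Emap act ρ) (ρ m) = m := by
  set S : H →ₗ[k] H := HopfAlgebra.antipode (R := k) with hS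
  set Ξ : M ⊗[k] (H ⊗[k] H) →ₗ[k] M :=
    (TensorProduct.lift act) ∘ₗ
      LinearMap.lTensor M ((LinearMap.mul' k H) ∘ₗ (LinearMap.rTensor H S)) with hΞ
  have claim1 : ∀ (w : M ⊗[k] H) (h : H),
      act (TensorProduct.lift act ((LinearMap.lTensor M S) w)) h =
        Ξ ((TensorProduct.assoc k M H H) (w ⊗ₜ h)) := by
    intro w h
    induction w using TensorProduct.induction_on with
    | zero => simp
    | tmul m'' g =>
        simp only [LinearMap.lTensor_tmul, TensorProduct.lift.tmul,
          TensorProduct.assoc_tmul, hΞ, LinearMap.comp_apply,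
          LinearMap.rTensor_tmul, LinearMap.mul'_apply]
        exact hact_mul m'' _ _
    | add u v hu hv =>
        simp only [map_add, TensorProduct.add_tmul, LinearMap.add_apply, hu, hv]
  have claim2 : ∀ (m' : M) (h : H),
      Ξ (m' ⊗ₜ (Coalgebra.comul (R := k) h)) = Coalgebra.counit (R := k) h • m' := by
    intro m' h
    rw [hΞ, LinearMap.comp_apply, LinearMap.lTensor_tmul, TensorProduct.lift.tmul,
      LinearMap.comp_apply, HopfAlgebra.mul_antipode_rTensor_comul_apply,
      Algebra.algebraMap_eq_smul_one, map_smul, hact_one]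
  obtain ⟨sf, hs⟩ := TensorProduct.exists_finset (ρ m)
  have e1 : TensorProduct.lift (act ∘ₗ Emap act ρ) (ρ m) =
      Ξ ((TensorProduct.assoc k M H H) ((LinearMap.rTensor H ρ) (ρ m))) := by
    conv_lhs => rw [hs]
    conv_rhs => rw [hs]
    simp only [map_sum, TensorProduct.lift.tmul, LinearMap.comp_apply,
      LinearMap.rTensor_tmul]
    exact Finset.sum_congr rfl fun p _ => claim1 (ρ p.1) p.2
  rw [e1, hcoassoc m]
  conv_lhs => rw [hs]
  simp only [map_sum, LinearMap.lTensor_tmul]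
  have e2 : ∀ p ∈ sf, Ξ (p.1 ⊗ₜ[k] Coalgebra.comul (R := k) p.2) =
      Coalgebra.counit (R := k) p.2 • p.1 := fun p _ => claim2 p.1 p.2
  rw [Finset.sum_congr rfl e2]
  have hc := hcounit m
  rw [hs] at hc
  simpa [map_sum, TensorProduct.rid_tmul] using hc

end HopfModule

/-- Fundamental theorem of Hopf modules: a right Hopf module `M` over a finitely generated
projective Hopf `k`-algebra `H` (right action `act`, coaction `ρ`, compatible in the Hopf
module sense) is isomorphic to the trivial Hopf module `P(M) ⊗ H` on the coinvariants
`P(M) = {m | ρ(m) = m ⊗ 1}`, and `P(M)` is a `k`-direct summand of `M`. -/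
theorem fundamental_theorem_hopf_modules (k H M : Type*) [CommRing k] [Ring H]
    [HopfAlgebra k H] [Module.Finite k H] [Module.Projective k H]
    [AddCommGroup M] [Module k M]
    (act : M →ₗ[k] H →ₗ[k] M)
    (hact_one : ∀ m : M, act m 1 = m)
    (hact_mul : ∀ (m : M) (g h : H), act (act m g) h = act m (g * h))
    (ρ : M →ₗ[k] M ⊗[k] H)
    (hcounit : ∀ m : M,
      (TensorProduct.rid k M) ((LinearMap.lTensor M (Coalgebra.counit (R := k))) (ρ m)) = m)
    (hcoassoc : ∀ m : M,
      (TensorProduct.assoc k M H H) ((LinearMap.rTensor H ρ) (ρ m)) =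
        (LinearMap.lTensor M (Coalgebra.comul (R := k))) (ρ m))
    (hcompat : ∀ (m : M) (h : H),
      ρ (act m h) =
        (TensorProduct.homTensorHomMap (RingHom.id k) M H M H)
          ((TensorProduct.map act.flip (LinearMap.mul k H).flip)
            (Coalgebra.comul (R := k) h)) (ρ m)) :
    ∃ (β : M ≃ₗ[k] (↥(LinearMap.ker (ρ - (TensorProduct.mk k M H).flip 1)) ⊗[k] H))
      (π : M →ₗ[k] ↥(LinearMap.ker (ρ - (TensorProduct.mk k M H).flip 1))),
      (∀ x : ↥(LinearMap.ker (ρ - (TensorProduct.mk k M H).flip 1)), π ↑x = x) ∧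
      (∀ (m : M) (h : H),
        β (act m h) =
          (LinearMap.lTensor (↥(LinearMap.ker (ρ - (TensorProduct.mk k M H).flip 1)))
            ((LinearMap.mul k H).flip h)) (β m)) ∧
      (∀ m : M,
        (LinearMap.rTensor H (β : M →ₗ[k] _)) (ρ m) =
          (TensorProduct.assoc k _ H H).symm
            ((LinearMap.lTensor (↥(LinearMap.ker (ρ - (TensorProduct.mk k M H).flip 1)))
              (Coalgebra.comul (R := k))) (β m))) := by
  have hcompat' : Hcompat act ρ := hcompat
  set K := LinearMap.ker (ρ - (TensorProduct.mk k M H).flip 1) with hK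
  have memK : ∀ x : M, x ∈ K ↔ ρ x = x ⊗ₜ[k] 1 := by
    intro x
    rw [hK, LinearMap.mem_ker, LinearMap.sub_apply, sub_eq_zero]
    rfl
  have hEK : ∀ m : M, Emap act ρ m ∈ K :=
    fun m => (memK _).2 (E_coinv act ρ hcompat' hcoassoc m)
  set P : M →ₗ[k] K := LinearMap.codRestrict K (Emap act ρ) hEK with hP
  set φ : K ⊗[k] H →ₗ[k] M := TensorProduct.lift (act ∘ₗ K.subtype) with hφ
  set βm : M →ₗ[k] K ⊗[k] H := (LinearMap.rTensor H P) ∘ₗ ρ with hβm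
  have φtmul : ∀ (x : K) (h : H), φ (x ⊗ₜ h) = act ↑x h := by
    intro x h; simp [hφ]
  have hφβ : φ ∘ₗ βm = LinearMap.id := by
    have comp1 : φ ∘ₗ LinearMap.rTensor H P = TensorProduct.lift (act ∘ₗ Emap act ρ) := by
      apply TensorProduct.ext'
      intro m' h
      simp [hφ, hP, LinearMap.codRestrict_apply]
    apply LinearMap.ext
    intro m
    rw [LinearMap.comp_apply, hβm, LinearMap.comp_apply, ← LinearMap.comp_apply φ,
      comp1, LinearMap.id_apply]
    exact recomb act ρ hact_one hact_mul hcounit hcoassoc m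
  have hβφ : βm ∘ₗ φ = LinearMap.id := by
    apply TensorProduct.ext'
    intro x h
    have hx : ρ ↑x = (↑x : M) ⊗ₜ[k] 1 := (memK ↑x).1 x.2
    rw [LinearMap.comp_apply, φtmul x h, hβm, LinearMap.comp_apply,
      rho_act act ρ hcompat' ↑x hx h, LinearMap.id_apply,
      ← LinearMap.comp_apply, ← LinearMap.rTensor_comp]
    have hPa : P ∘ₗ (act ↑x) =
        (LinearMap.toSpanSingleton k K x) ∘ₗ (Coalgebra.counit (R := k)) := by
      apply LinearMap.ext
      intro g
      apply Subtype.ext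
      rw [LinearMap.comp_apply, hP, LinearMap.codRestrict_apply, LinearMap.comp_apply,
        LinearMap.toSpanSingleton_apply]
      rw [E_act act ρ hcompat' hact_one hact_mul ↑x hx g]
      rfl
    rw [hPa, LinearMap.rTensor_comp, LinearMap.comp_apply,
      Coalgebra.rTensor_counit_comul, LinearMap.rTensor_tmul,
      LinearMap.toSpanSingleton_apply, one_smul]
  set β : M ≃ₗ[k] K ⊗[k] H := LinearEquiv.ofLinear βm φ hβφ hφβ with hβ
  have hβcoe : ∀ m : M, β m = βm m := fun m => rfl
  have hinjφ : Function.Injective φ := by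
    intro a b hab
    have h1 := LinearMap.congr_fun hβφ a
    have h2 := LinearMap.congr_fun hβφ b
    simp only [LinearMap.comp_apply, LinearMap.id_apply] at h1 h2
    rw [← h1, ← h2, hab]
  refine ⟨β, P, ?_, ?_, ?_⟩
  · intro x
    apply Subtype.ext
    rw [hP, LinearMap.codRestrict_apply]
    exact E_mem act ρ hact_one ↑x ((memK ↑x).1 x.2)
  · intro m h
    apply hinjφ
    have Hm : φ ∘ₗ LinearMap.lTensor K ((LinearMap.mul k H).flip h) =
        (act.flip h) ∘ₗ φ := by
      apply TensorProduct.ext'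
      intro x g
      simp only [LinearMap.comp_apply, LinearMap.lTensor_tmul, LinearMap.flip_apply,
        LinearMap.mul_apply', φtmul]
      exact (hact_mul ↑x g h).symm
    rw [hβcoe, hβcoe]
    have hm1 := LinearMap.congr_fun hφβ (act m h)
    have hm2 := LinearMap.congr_fun hφβ m
    simp only [LinearMap.comp_apply, LinearMap.id_apply] at hm1 hm2
    have hm3 := LinearMap.congr_fun Hm (βm m)
    simp only [LinearMap.comp_apply] at hm3
    rw [hm1, hm3, hm2, LinearMap.flip_apply]
  · intro m
    have hβcoe2 : (β : M →ₗ[k] K ⊗[k] H) = βm := rfl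
    rw [hβcoe2, hβcoe]
    have hinj2 : Function.Injective (LinearMap.rTensor H φ) := by
      have heq : LinearMap.rTensor H φ =
          (TensorProduct.congr (β.symm) (LinearEquiv.refl k H)).toLinearMap := by
        apply TensorProduct.ext'
        intro x h
        simp only [LinearMap.rTensor_tmul, LinearEquiv.coe_coe, TensorProduct.congr_tmul,
          LinearEquiv.refl_apply]
        rfl
      rw [heq]
      exact (TensorProduct.congr (β.symm) (LinearEquiv.refl k H)).injective
    apply hinj2
    have lhs : LinearMap.rTensor H φ ((LinearMap.rTensor H βm) (ρ m)) = ρ m := by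
      rw [← LinearMap.comp_apply, ← LinearMap.rTensor_comp, hφβ, LinearMap.rTensor_id,
        LinearMap.id_apply]
    rw [lhs]
    have HH : (LinearMap.rTensor H φ) ∘ₗ (TensorProduct.assoc k K H H).symm.toLinearMap ∘ₗ
        (LinearMap.lTensor K (Coalgebra.comul (R := k))) = ρ ∘ₗ φ := by
      apply TensorProduct.ext'
      intro x h
      have hx : ρ ↑x = (↑x : M) ⊗ₜ[k] 1 := (memK ↑x).1 x.2
      have sub : ∀ w : H ⊗[k] H,
          LinearMap.rTensor H φ ((TensorProduct.assoc k K H H).symm (x ⊗ₜ w)) =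
            LinearMap.rTensor H (act ↑x) w := by
        intro w
        induction w using TensorProduct.induction_on with
        | zero =>
            rw [TensorProduct.tmul_zero, LinearEquiv.map_zero, LinearMap.map_zero,
              LinearMap.map_zero]
        | tmul h₁ h₂ =>
            rw [TensorProduct.assoc_symm_tmul, LinearMap.rTensor_tmul,
              LinearMap.rTensor_tmul, φtmul]
        | add u v hu hv => simp only [TensorProduct.tmul_add, map_add, hu, hv]
      simp only [LinearMap.comp_apply, LinearMap.lTensor_tmul, LinearEquiv.coe_coe]
      rw [sub (Coalgebra.comul (R := k) h), ← rho_act act ρ hcompat' ↑x hx h, φtmul]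
    have := LinearMap.congr_fun HH (βm m)
    simp only [LinearMap.comp_apply, LinearEquiv.coe_coe] at this
    rw [this]
    have hm2 := LinearMap.congr_fun hφβ m
    simp only [LinearMap.comp_apply, LinearMap.id_apply] at hm2
    rw [hm2]
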